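/- Let {Z_k}_{k=1}^K be random variables adapted so that Z_k ∈ [0,1] and E[Z_k | F_{k−1}] = z_k with z_k ≤ x_k for known constants x_k ≥ 0, and let x̄_k ≥ x_k, θ > 0. Then with probability at least 1 − δ: ∑_{k=1}^K ( Z_k/(x̄_k + θ) − z_k/x̄_k ) ≤ log(1/δ)/(2θ), where terms with x̄_k = 0 (forcing x_k = z_k = Z_k = 0 a.s.) are interpreted as 0. -/

import Mathlib

open MeasureTheory

lemma aux_exp_bound (s : ℝ) (hs : 0 ≤ s) : (1 - s) * Real.exp (2 * s) ≤ 1 + s := by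
  set f : ℝ → ℝ := fun t => 1 + t - (1 - t) * Real.exp (2 * t) with hf
  have hderiv : ∀ t : ℝ, HasDerivAt f (1 - ((-1) * Real.exp (2 * t) + (1 - t) * (Real.exp (2 * t) * 2))) t := by
    intro t
    have h1 : HasDerivAt (fun t : ℝ => 2 * t) 2 t := by
      simpa using (hasDerivAt_id t).const_mul (2 : ℝ)
    have h2 : HasDerivAt (fun t : ℝ => Real.exp (2 * t)) (Real.exp (2 * t) * 2) t := h1.exp
    have h3 : HasDerivAt (fun t : ℝ => 1 - t) (-1) t := by
      simpa using (hasDerivAt_id t).const_sub (1:ℝ)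
    have h4 := h3.mul h2
    have h5 : HasDerivAt (fun t : ℝ => 1 + t) 1 t := by
      simpa using (hasDerivAt_id t).const_add (1:ℝ)
    exact h5.sub h4
  have hmono : MonotoneOn f (Set.Ici 0) := by
    apply monotoneOn_of_deriv_nonneg (convex_Ici 0)
    · exact fun t _ => (hderiv t).continuousAt.continuousWithinAt
    · exact fun t _ => (hderiv t).differentiableAt.differentiableWithinAt
    · intro t _
      rw [(hderiv t).deriv]
      have h6 := Real.add_one_le_exp (-(2 * t))
      have h7 : (0:ℝ) < Real.exp (2 * t) := Real.exp_pos _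
      have h8 : Real.exp (-(2 * t)) * Real.exp (2 * t) = 1 := by
        rw [← Real.exp_add]; simp
      nlinarith
  have h0 : f 0 ≤ f s := hmono (Set.self_mem_Ici) hs hs
  simp only [f] at h0
  simp only [mul_zero, Real.exp_zero] at h0
  linarith

lemma aux_convex_exp (a t : ℝ) (ht0 : 0 ≤ t) (ht1 : t ≤ 1) :
    Real.exp (a * t) ≤ 1 + (Real.exp a - 1) * t := by
  have h := convexOn_exp.2 (Set.mem_univ (0:ℝ)) (Set.mem_univ a)
    (by linarith : (0:ℝ) ≤ 1 - t) ht0 (by ring)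
  simp only [smul_eq_mul, mul_zero, zero_add, Real.exp_zero] at h
  calc Real.exp (a * t) = Real.exp (t * a) := by ring_nf
    _ ≤ (1 - t) * 1 + t * Real.exp a := h
    _ = 1 + (Real.exp a - 1) * t := by ring

theorem stmt_12 {Ω : Type*} {m0 : MeasurableSpace Ω} (μ : Measure Ω) [IsProbabilityMeasure μ]
    (F : Filtration ℕ m0) (K : ℕ) (Z : ℕ → Ω → ℝ) (z x xbar : ℕ → ℝ) (θ δ : ℝ)
    (hθ : 0 < θ) (hδ0 : 0 < δ) (hδ1 : δ < 1)
    (hZ01 : ∀ k ω, Z k ω ∈ Set.Icc (0 : ℝ) 1)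
    (hadapt : ∀ k, StronglyMeasurable[F (k + 1)] (Z k))
    (hcond : ∀ k, μ[Z k | F k] =ᵐ[μ] fun _ => z k)
    (hzx : ∀ k, z k ≤ x k) (hx0 : ∀ k, 0 ≤ x k) (hxx : ∀ k, x k ≤ xbar k) :
    μ {ω | Real.log (1 / δ) / (2 * θ) <
        ∑ k ∈ Finset.range K,
          (if xbar k = 0 then 0 else Z k ω / (xbar k + θ) - z k / xbar k)} ≤
      ENNReal.ofReal δ := by
  classical
  set Y : ℕ → Ω → ℝ := fun k ω => if xbar k = 0 then 0 else Z k ω / (xbar k + θ) - z k / xbar k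
    with hY
  set g : ℕ → Ω → ℝ := fun k ω => Real.exp (2 * θ * Y k ω) with hg
  set P : ℕ → Ω → ℝ := fun n ω => ∏ k ∈ Finset.range n, g k ω with hP
  have hxbar0 : ∀ k, 0 ≤ xbar k := fun k => (hx0 k).trans (hxx k)
  have hZm0 : ∀ k, StronglyMeasurable[m0] (Z k) := fun k => (hadapt k).mono (F.le _)
  have hZint : ∀ k, Integrable (Z k) μ := by
    intro k
    refine Integrable.mono' (integrable_const (1:ℝ)) (hZm0 k).aestronglyMeasurable ?_
    filter_upwards with ω
    rw [Real.norm_eq_abs, abs_le]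
    exact ⟨by linarith [(hZ01 k ω).1], (hZ01 k ω).2⟩
  have hz0 : ∀ k, 0 ≤ z k := by
    intro k
    have h1 : ∫ ω, (μ[Z k|F k]) ω ∂μ = ∫ ω, Z k ω ∂μ := integral_condExp (F.le k)
    have h2 : ∫ ω, (μ[Z k|F k]) ω ∂μ = z k := by
      rw [integral_congr_ae (hcond k)]; simp
    have h3 : 0 ≤ ∫ ω, Z k ω ∂μ := integral_nonneg fun ω => (hZ01 k ω).1
    linarith [h1, h2, h3]
  -- bounds on Y and g
  have hYbound : ∀ k ω, -1 ≤ Y k ω ∧ Y k ω ≤ 1 / θ := by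
    intro k ω
    simp only [hY]
    by_cases h0 : xbar k = 0
    · simp [h0]; positivity
    · have hxk : 0 < xbar k := lt_of_le_of_ne (hxbar0 k) (Ne.symm h0)
      rw [if_neg h0]
      constructor
      · have hzk : z k / xbar k ≤ 1 := by
          rw [div_le_one hxk]; linarith [hzx k, hxx k]
        have hZ : 0 ≤ Z k ω / (xbar k + θ) := by
          apply div_nonneg (hZ01 k ω).1; linarith
        linarith
      · have h1 : Z k ω / (xbar k + θ) ≤ 1 / θ := by
          apply div_le_div₀ (by positivity) (hZ01 k ω).2 hθ (by linarith)
        have h2 : 0 ≤ z k / xbar k := div_nonneg (hz0 k) hxk.le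
        linarith
  have hgpos : ∀ k ω, 0 < g k ω := fun k ω => Real.exp_pos _
  have hgle : ∀ k ω, g k ω ≤ Real.exp 2 := by
    intro k ω
    apply Real.exp_le_exp.2
    have := (hYbound k ω).2
    calc 2 * θ * Y k ω ≤ 2 * θ * (1 / θ) := by
          apply mul_le_mul_of_nonneg_left this (by positivity)
      _ = 2 := by field_simp
  have hYm : ∀ k, StronglyMeasurable[F (k + 1)] (Y k) := by
    intro k
    by_cases h0 : xbar k = 0
    · have : Y k = fun _ => (0:ℝ) := by funext ω; simp [hY, h0]
      rw [this]; exact stronglyMeasurable_const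
    · have : Y k = fun ω => Z k ω * (xbar k + θ)⁻¹ - z k / xbar k := by
        funext ω; simp [hY, h0, div_eq_mul_inv]
      rw [this]
      exact ((hadapt k).mul stronglyMeasurable_const).sub stronglyMeasurable_const
  have hgm : ∀ k, StronglyMeasurable[F (k + 1)] (g k) := by
    intro k
    exact Real.continuous_exp.comp_stronglyMeasurable ((hYm k).const_mul (2 * θ))
  have hgm0 : ∀ k, StronglyMeasurable[m0] (g k) := fun k => (hgm k).mono (F.le _)
  have hgint : ∀ k, Integrable (g k) μ := by
    intro k
    refine Integrable.mono' (integrable_const (Real.exp 2)) (hgm0 k).aestronglyMeasurable ?_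
    filter_upwards with ω
    rw [Real.norm_eq_abs, abs_of_pos (hgpos k ω)]
    exact hgle k ω
  have hPm : ∀ n, StronglyMeasurable[F n] (P n) := by
    intro n
    apply Finset.stronglyMeasurable_fun_prod
    intro k hk
    exact (hgm k).mono (F.mono (Finset.mem_range.1 hk))
  have hPpos : ∀ n ω, 0 < P n ω := fun n ω => Finset.prod_pos fun k _ => hgpos k ω
  have hPle' : ∀ n ω, P n ω ≤ Real.exp 2 ^ n := by
    intro n ω
    calc P n ω ≤ ∏ k ∈ Finset.range n, Real.exp 2 :=
          Finset.prod_le_prod (fun k _ => (hgpos k ω).le) (fun k _ => hgle k ω)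
      _ = Real.exp 2 ^ n := by simp
  have hPint : ∀ n, Integrable (P n) μ := by
    intro n
    refine Integrable.mono' (integrable_const (Real.exp 2 ^ n))
      ((hPm n).mono (F.le n)).aestronglyMeasurable ?_
    filter_upwards with ω
    rw [Real.norm_eq_abs, abs_of_pos (hPpos n ω)]
    exact hPle' n ω
  -- key conditional bound
  have hkey : ∀ k, ∀ᵐ ω ∂μ, (μ[g k | F k]) ω ≤ 1 := by
    intro k
    by_cases h0 : xbar k = 0
    · have hgc : g k = fun _ => (1:ℝ) := by
        funext ω; simp [hg, hY, h0]
      rw [hgc, condExp_const (F.le k)]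
      filter_upwards with ω using le_refl _
    · have hxk : 0 < xbar k := lt_of_le_of_ne (hxbar0 k) (Ne.symm h0)
      set a : ℝ := 2 * θ / (xbar k + θ) with ha
      set b : ℝ := 2 * θ * (z k / xbar k) with hb
      have hgeq : g k = Real.exp (-b) • fun ω => Real.exp (a * Z k ω) := by
        funext ω
        simp only [hg, hY, if_neg h0, Pi.smul_apply, smul_eq_mul]
        rw [← Real.exp_add]
        congr 1
        rw [ha, hb]
        have h1 : xbar k + θ ≠ 0 := by positivity
        field_simp
        ring
      have hintA : Integrable (fun ω => Real.exp (a * Z k ω)) μ := by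
        refine Integrable.mono' (integrable_const (Real.exp |a|))
          (Real.continuous_exp.comp_stronglyMeasurable
            ((hZm0 k).const_mul a)).aestronglyMeasurable ?_
        filter_upwards with ω
        rw [Real.norm_eq_abs, abs_of_pos (Real.exp_pos _)]
        apply Real.exp_le_exp.2
        calc a * Z k ω ≤ |a * Z k ω| := le_abs_self _
          _ = |a| * |Z k ω| := abs_mul _ _
          _ ≤ |a| * 1 := by
              apply mul_le_mul_of_nonneg_left _ (abs_nonneg a)
              rw [abs_le]; exact ⟨by linarith [(hZ01 k ω).1], (hZ01 k ω).2⟩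
          _ = |a| := mul_one _
      have hintB : Integrable (fun ω => 1 + (Real.exp a - 1) * Z k ω) μ :=
        (integrable_const (1:ℝ)).add ((hZint k).const_mul _)
      have hmono := condExp_mono (m := F k) hintA hintB
        (ae_of_all _ fun ω => aux_convex_exp a (Z k ω) (hZ01 k ω).1 (hZ01 k ω).2)
      have hcondB : μ[fun ω => 1 + (Real.exp a - 1) * Z k ω | F k]
          =ᵐ[μ] fun _ => 1 + (Real.exp a - 1) * z k := by
        have heq : (fun ω => 1 + (Real.exp a - 1) * Z k ω)
            = (fun _ => (1:ℝ)) + (Real.exp a - 1) • Z k := by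
          funext ω; simp [smul_eq_mul]
        rw [heq]
        refine (condExp_add (integrable_const (1:ℝ)) ((hZint k).smul _) _).trans ?_
        have h1 : μ[fun _ => (1:ℝ) | F k] = fun _ => (1:ℝ) := condExp_const (F.le k) 1
        have h2 : μ[(Real.exp a - 1) • Z k | F k] =ᵐ[μ] (Real.exp a - 1) • μ[Z k | F k] :=
          condExp_smul (Real.exp a - 1) (Z k) _
        filter_upwards [h2, hcond k] with ω hω1 hω2
        simp only [Pi.add_apply, Pi.smul_apply, smul_eq_mul, h1, hω1]
        rw [hω2]
      have hsm : μ[g k | F k] =ᵐ[μ] Real.exp (-b) • μ[fun ω => Real.exp (a * Z k ω) | F k] := by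
        rw [hgeq]
        exact condExp_smul (Real.exp (-b)) _ _
      -- numeric bound : exp(-b) * (1 + (exp a - 1) * z k) ≤ 1
      have hnum : Real.exp (-b) * (1 + (Real.exp a - 1) * z k) ≤ 1 := by
        have hexp_a : Real.exp a - 1 ≤ 2 * θ / xbar k := by
          have hs := aux_exp_bound (θ / (xbar k + θ)) (by positivity)
          have h2s : 2 * (θ / (xbar k + θ)) = a := by rw [ha]; ring
          rw [h2s] at hs
          have hxθ : (0:ℝ) < xbar k + θ := by linarith
          have he1 : 1 - θ / (xbar k + θ) = xbar k / (xbar k + θ) := by field_simp; ring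
          have he2 : 1 + θ / (xbar k + θ) = (xbar k + 2 * θ) / (xbar k + θ) := by
            field_simp; ring
          rw [he1, he2, div_mul_eq_mul_div, div_le_div_iff₀ hxθ hxθ] at hs
          have h6 : Real.exp a * xbar k ≤ xbar k + 2 * θ := by nlinarith [hs, hxθ]
          rw [sub_le_iff_le_add]
          rw [div_add' _ _ _ (ne_of_gt hxk), le_div_iff₀ hxk]
          linarith [h6]
        have h1 : (Real.exp a - 1) * z k ≤ b := by
          rw [hb]
          have : 2 * θ * (z k / xbar k) = (2 * θ / xbar k) * z k := by ring
          rw [this]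
          exact mul_le_mul_of_nonneg_right hexp_a (hz0 k)
        have h2 : 1 + (Real.exp a - 1) * z k ≤ Real.exp b := by
          have h3 : 1 + (Real.exp a - 1) * z k ≤ 1 + b := by linarith
          have h4 : b + 1 ≤ Real.exp b := Real.add_one_le_exp b
          linarith
        have h5 : 0 < Real.exp (-b) := Real.exp_pos _
        calc Real.exp (-b) * (1 + (Real.exp a - 1) * z k) ≤ Real.exp (-b) * Real.exp b :=
              mul_le_mul_of_nonneg_left h2 h5.le
          _ = 1 := by rw [← Real.exp_add]; simp
      filter_upwards [hsm, hmono, hcondB] with ω h1 h2 h3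
      rw [h1]
      simp only [Pi.smul_apply, smul_eq_mul]
      calc Real.exp (-b) * (μ[fun ω => Real.exp (a * Z k ω) | F k]) ω
          ≤ Real.exp (-b) * (1 + (Real.exp a - 1) * z k) := by
            apply mul_le_mul_of_nonneg_left _ (Real.exp_pos _).le
            calc (μ[fun ω => Real.exp (a * Z k ω) | F k]) ω
                ≤ (μ[fun ω => 1 + (Real.exp a - 1) * Z k ω | F k]) ω := h2
              _ = 1 + (Real.exp a - 1) * z k := h3
        _ ≤ 1 := hnum
  -- supermartingale integral bound by induction
  have hPint1 : ∀ n, ∫ ω, P n ω ∂μ ≤ 1 := by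
    intro n
    induction n with
    | zero => simp [hP]
    | succ n ih =>
      have hPsucc : P (n + 1) = fun ω => P n ω * g n ω := by
        funext ω; simp [hP, Finset.prod_range_succ]
      rw [hPsucc]
      have hintPg : Integrable (fun ω => P n ω * g n ω) μ := by
        have : (fun ω => P n ω * g n ω) = P (n + 1) := hPsucc.symm
        rw [this]; exact hPint (n + 1)
      have h1 : ∫ ω, P n ω * g n ω ∂μ = ∫ ω, (μ[fun ω => P n ω * g n ω | F n]) ω ∂μ :=
        (integral_condExp (F.le n)).symm
      have h2 : μ[fun ω => P n ω * g n ω | F n] =ᵐ[μ] fun ω => P n ω * (μ[g n | F n]) ω := by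
        have := condExp_mul_of_stronglyMeasurable_left (hPm n) (by
          have : P n * g n = fun ω => P n ω * g n ω := rfl
          rw [this]; exact hintPg) (hgint n)
        exact this
      rw [h1, integral_congr_ae h2]
      have hint2 : Integrable (fun ω => P n ω * (μ[g n | F n]) ω) μ :=
        (integrable_condExp (m := F n) (f := fun ω => P n ω * g n ω)).congr h2
      calc ∫ ω, P n ω * (μ[g n | F n]) ω ∂μ ≤ ∫ ω, P n ω ∂μ := by
            apply integral_mono_ae hint2 (hPint n)
            filter_upwards [hkey n] with ω hω
            calc P n ω * (μ[g n | F n]) ω ≤ P n ω * 1 :=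
                  mul_le_mul_of_nonneg_left hω (hPpos n ω).le
              _ = P n ω := mul_one _
        _ ≤ 1 := ih
  -- Markov
  have hPK : ∀ ω, P K ω = Real.exp (2 * θ * ∑ k ∈ Finset.range K, Y k ω) := by
    intro ω
    simp only [hP, hg]
    rw [← Real.exp_sum, Finset.mul_sum]
  have hsubset : {ω | Real.log (1 / δ) / (2 * θ) <
      ∑ k ∈ Finset.range K, (if xbar k = 0 then 0 else Z k ω / (xbar k + θ) - z k / xbar k)}
      ⊆ {ω | 1 / δ ≤ P K ω} := by
    intro ω hω
    simp only [Set.mem_setOf_eq] at hω ⊢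
    have hsum : Real.log (1 / δ) / (2 * θ) < ∑ k ∈ Finset.range K, Y k ω := hω
    rw [hPK ω]
    have h1 : Real.log (1 / δ) < 2 * θ * ∑ k ∈ Finset.range K, Y k ω := by
      rw [div_lt_iff₀ (by positivity : (0:ℝ) < 2 * θ), mul_comm] at hsum
      exact hsum
    calc 1 / δ = Real.exp (Real.log (1 / δ)) := (Real.exp_log (by positivity)).symm
      _ ≤ Real.exp (2 * θ * ∑ k ∈ Finset.range K, Y k ω) := Real.exp_le_exp.2 h1.le
  have hmarkov := mul_meas_ge_le_integral_of_nonneg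
    (ae_of_all μ fun ω => (hPpos K ω).le) (hPint K) (1 / δ)
  have hle1 := hPint1 K
  have htoReal : (μ {ω | 1 / δ ≤ P K ω}).toReal ≤ δ := by
    have h1 : (1 / δ) * (μ {ω | 1 / δ ≤ P K ω}).toReal ≤ 1 := le_trans hmarkov hle1
    have h2 : 0 ≤ (μ {ω | 1 / δ ≤ P K ω}).toReal := ENNReal.toReal_nonneg
    have h3 : δ * ((1 / δ) * (μ {ω | 1 / δ ≤ P K ω}).toReal) ≤ δ * 1 :=
      mul_le_mul_of_nonneg_left h1 hδ0.le
    have h4 : δ * ((1 / δ) * (μ {ω | 1 / δ ≤ P K ω}).toReal)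
        = (μ {ω | 1 / δ ≤ P K ω}).toReal := by
      field_simp
    linarith
  calc μ {ω | Real.log (1 / δ) / (2 * θ) <
      ∑ k ∈ Finset.range K, (if xbar k = 0 then 0 else Z k ω / (xbar k + θ) - z k / xbar k)}
      ≤ μ {ω | 1 / δ ≤ P K ω} := measure_mono hsubset
    _ ≤ ENNReal.ofReal δ := by
        rw [← ENNReal.ofReal_toReal (measure_ne_top μ _)]
        exact ENNReal.ofReal_le_ofReal htoReal
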